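/- Let m ≥ 1 be an integer and let ρ ∈ (0,1). Define S_t = Σ_{j=1}^{t+1} (j/(t+1)) · C((m+1)(t+1), t+1−j) · ρ^{t+1−j} (1−ρ)^{m(t+1)+j} for each integer t ≥ 0, where C denotes the binomial coefficient. Then the sequence (S_t) converges as t → ∞, and lim_{t→∞} S_t = 1 − (m+1)ρ if ρ < 1/(m+1), and lim_{t→∞} S_t = 0 if ρ ≥ 1/(m+1); equivalently, lim_{t→∞} S_t = max(1 − (m+1)ρ, 0). -/

import Mathlib

open Filter Finset

lemma binom_sum (N : ℕ) (x y : ℝ) :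
    ∑ k ∈ range (N+1), (N.choose k : ℝ) * x^k * y^(N-k) = (x+y)^N := by
  rw [add_pow]
  exact sum_congr rfl fun k hk => by ring

lemma choose_key (M j : ℕ) : ((j:ℝ)+1) * ((M+1).choose (j+1) : ℝ) = (M+1) * (M.choose j : ℝ) := by
  have h : ((M+1) * M.choose j : ℕ) = ((M+1).choose (j+1) * (j+1) : ℕ) := Nat.add_one_mul_choose_eq M j
  have := congrArg (fun n : ℕ => (n : ℝ)) h
  push_cast at this
  linarith

lemma binom_sum_k (N : ℕ) (x y : ℝ) :
    ∑ k ∈ range (N+1), (k:ℝ) * (N.choose k : ℝ) * x^k * y^(N-k)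
      = N * x * (x+y)^(N-1) := by
  cases N with
  | zero => simp
  | succ M =>
    rw [Finset.sum_range_succ']
    have : ∀ j ∈ range (M+1),
        ((j+1 : ℕ):ℝ) * ((M+1).choose (j+1) : ℝ) * x^(j+1) * y^(M+1-(j+1))
        = ((M+1) * x) * ((M.choose j : ℝ) * x^j * y^(M-j)) := by
      intro j _
      have hc := choose_key M j
      push_cast
      rw [pow_succ]
      linear_combination (x^j * x * y^(M-j)) * hc
    rw [sum_congr rfl this, ← mul_sum, binom_sum]
    push_cast
    simp

lemma binom_sum_kk (N : ℕ) (x y : ℝ) :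
    ∑ k ∈ range (N+1), (k:ℝ) * ((k:ℝ) - 1) * (N.choose k : ℝ) * x^k * y^(N-k)
      = N * ((N:ℝ) - 1) * x^2 * (x+y)^(N-2) := by
  cases N with
  | zero => simp
  | succ M =>
    rw [Finset.sum_range_succ']
    have : ∀ j ∈ range (M+1),
        ((j+1 : ℕ):ℝ) * (((j+1:ℕ):ℝ) - 1) * ((M+1).choose (j+1) : ℝ) * x^(j+1) * y^(M+1-(j+1))
        = ((M+1) * x) * ((j:ℝ) * (M.choose j : ℝ) * x^j * y^(M-j)) := by
      intro j _
      have hc := choose_key M j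
      push_cast
      rw [pow_succ]
      linear_combination ((j:ℝ) * x^j * x * y^(M-j)) * hc
    rw [sum_congr rfl this, ← mul_sum, binom_sum_k]
    push_cast
    simp
    ring

lemma var_sum (N : ℕ) (ρ : ℝ) :
    ∑ k ∈ range (N+1), (N.choose k : ℝ) * ρ^k * (1-ρ)^(N-k) * ((k:ℝ) - N*ρ)^2
      = N * ρ * (1-ρ) := by
  have hxy : ρ + (1-ρ) = 1 := by ring
  have h1 := binom_sum N ρ (1-ρ)
  have h2 := binom_sum_k N ρ (1-ρ)
  have h3 := binom_sum_kk N ρ (1-ρ)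
  rw [hxy, one_pow] at h1 h2 h3
  have expand : ∀ k ∈ range (N+1),
      (N.choose k : ℝ) * ρ^k * (1-ρ)^(N-k) * ((k:ℝ) - N*ρ)^2
      = (k:ℝ) * ((k:ℝ) - 1) * (N.choose k : ℝ) * ρ^k * (1-ρ)^(N-k)
        + (1 - 2*(N:ℝ)*ρ) * ((k:ℝ) * (N.choose k : ℝ) * ρ^k * (1-ρ)^(N-k))
        + ((N:ℝ)^2*ρ^2) * ((N.choose k : ℝ) * ρ^k * (1-ρ)^(N-k)) := by
    intro k _
    ring
  rw [sum_congr rfl expand]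
  rw [sum_add_distrib, sum_add_distrib, ← mul_sum, ← mul_sum, h1, h2, h3]
  ring

lemma reindex (m n : ℕ) (hn : 1 ≤ n) (ρ : ℝ) :
    ∑ j ∈ Icc 1 n, (j:ℝ)/n * (((m+1)*n).choose (n-j) : ℝ) * ρ^(n-j) * (1-ρ)^(m*n+j)
    = ∑ k ∈ range ((m+1)*n+1),
        (((m+1)*n).choose k : ℝ) * ρ^k * (1-ρ)^((m+1)*n-k) * max (1 - (k:ℝ)/n) 0 := by
  have hn0 : (n:ℝ) ≠ 0 := by positivity
  have step1 : ∑ j ∈ Icc 1 n, (j:ℝ)/n * (((m+1)*n).choose (n-j) : ℝ) * ρ^(n-j) * (1-ρ)^(m*n+j)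
      = ∑ k ∈ range n,
        (((m+1)*n).choose k : ℝ) * ρ^k * (1-ρ)^((m+1)*n-k) * max (1 - (k:ℝ)/n) 0 := by
    refine Finset.sum_nbij' (fun j => n - j) (fun k => n - k) ?_ ?_ ?_ ?_ ?_
    · intro j hj; simp only [mem_Icc] at hj; simp only [mem_range]; omega
    · intro k hk; simp only [mem_range] at hk; simp only [mem_Icc]; omega
    · intro j hj; simp only [mem_Icc] at hj; show n - (n - j) = j; omega
    · intro k hk; simp only [mem_range] at hk; show n - (n - k) = k; omega
    · intro j hj
      simp only [mem_Icc] at hj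
      have h1 : (m+1)*n - (n-j) = m*n + j := by
        have e : (m+1)*n = m*n + n := by ring
        omega
      rw [h1]
      have h2 : ((n - j : ℕ) : ℝ) = (n:ℝ) - j := by
        rw [Nat.cast_sub hj.2]
      have h3 : max (1 - ((n - j : ℕ):ℝ)/n) 0 = (j:ℝ)/n := by
        rw [h2]
        have : 1 - ((n:ℝ) - j)/n = (j:ℝ)/n := by field_simp; ring
        rw [this, max_eq_left]
        positivity
      rw [h3]
      ring
  rw [step1]
  refine Finset.sum_subset ?_ ?_
  · intro k hk; simp only [mem_range] at *; nlinarith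
  · intro k _ hk
    simp only [mem_range, not_lt] at hk
    have : max (1 - (k:ℝ)/n) 0 = 0 := by
      apply max_eq_right
      have : (1:ℝ) ≤ (k:ℝ)/n := by
        rw [le_div_iff₀ (by positivity)]
        simpa using (Nat.cast_le (α := ℝ)).mpr hk
      linarith
    rw [this, mul_zero]


/-- The sums `S_t = Σ_{j=1}^{t+1} (j/(t+1)) C((m+1)(t+1), t+1−j) ρ^{t+1−j} (1−ρ)^{m(t+1)+j}`
converge, as `t → ∞`, to `max(1 − (m+1)ρ, 0)`. -/
theorem tendsto_prob_block (m : ℕ) (hm : 1 ≤ m) (ρ : ℝ) (hρ : ρ ∈ Set.Ioo (0 : ℝ) 1) :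
    Tendsto (fun t : ℕ =>
        ∑ j ∈ Finset.Icc 1 (t + 1),
          (j : ℝ) / (t + 1) * (Nat.choose ((m + 1) * (t + 1)) (t + 1 - j) : ℝ) *
            ρ ^ (t + 1 - j) * (1 - ρ) ^ (m * (t + 1) + j))
      atTop (nhds (max (1 - (m + 1) * ρ) 0)) := by
  obtain ⟨hρ0, hρ1⟩ := hρ
  set L : ℝ := max (1 - (m + 1) * ρ) 0 with hL
  rw [← tendsto_sub_nhds_zero_iff]
  apply squeeze_zero_norm (a := fun t : ℕ => Real.sqrt (((m:ℝ)+1)*ρ*(1-ρ)/(t+1)))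
  · intro t
    set n : ℕ := t + 1 with hn
    set N : ℕ := (m + 1) * n with hNdef
    have hn0 : (0:ℝ) < (n:ℝ) := by positivity
    have hNcast : (N:ℝ) = ((m:ℝ)+1) * n := by rw [hNdef]; push_cast; ring
    set w : ℕ → ℝ := fun k => (N.choose k : ℝ) * ρ^k * (1-ρ)^(N-k) with hwdef
    have hw0 : ∀ k, 0 ≤ w k := by
      intro k
      have : (0:ℝ) ≤ 1 - ρ := by linarith
      positivity
    have hw1 : ∑ k ∈ range (N+1), w k = 1 := by
      have := binom_sum N ρ (1-ρ)
      have hxy : ρ + (1-ρ) = 1 := by ring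
      rw [hxy, one_pow] at this
      exact this
    have hvar : ∑ k ∈ range (N+1), w k * ((k:ℝ) - N*ρ)^2 = N*ρ*(1-ρ) := by
      have := var_sum N ρ
      rw [← this]
    -- rewrite the sum
    have hS : ∑ j ∈ Finset.Icc 1 (t + 1),
          (j : ℝ) / (t + 1) * (Nat.choose ((m + 1) * (t + 1)) (t + 1 - j) : ℝ) *
            ρ ^ (t + 1 - j) * (1 - ρ) ^ (m * (t + 1) + j)
        = ∑ k ∈ range (N+1), w k * max (1 - (k:ℝ)/n) 0 := by
      have := reindex m n (by omega) ρ
      rw [hn] at this ⊢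
      push_cast at this ⊢
      rw [this]
    rw [hS]
    -- Lipschitz bound
    have hLmax : L = max (1 - (N:ℝ)*ρ/n) 0 := by
      rw [hL, hNcast]
      congr 1
      field_simp
    have hstep1 : |∑ k ∈ range (N+1), w k * max (1 - (k:ℝ)/n) 0 - L|
        ≤ (∑ k ∈ range (N+1), w k * |(k:ℝ) - N*ρ|) / n := by
      have hrw : ∑ k ∈ range (N+1), w k * max (1 - (k:ℝ)/n) 0 - L
          = ∑ k ∈ range (N+1), w k * (max (1 - (k:ℝ)/n) 0 - L) := by
        rw [sum_congr rfl fun k (_ : k ∈ range (N+1)) => mul_sub (w k) (max (1 - (k:ℝ)/n) 0) L,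
          Finset.sum_sub_distrib, ← Finset.sum_mul, hw1, one_mul]
      rw [hrw]
      calc |∑ k ∈ range (N+1), w k * (max (1 - (k:ℝ)/n) 0 - L)|
          ≤ ∑ k ∈ range (N+1), |w k * (max (1 - (k:ℝ)/n) 0 - L)| :=
            Finset.abs_sum_le_sum_abs _ _
        _ ≤ ∑ k ∈ range (N+1), w k * (|(k:ℝ) - N*ρ| / n) := by
            apply Finset.sum_le_sum
            intro k _
            rw [abs_mul, abs_of_nonneg (hw0 k)]
            apply mul_le_mul_of_nonneg_left _ (hw0 k)
            have h1 : |max (1 - (k:ℝ)/n) 0 - max (1 - ((m:ℝ)+1)*ρ) 0|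
                ≤ |(1 - (k:ℝ)/n) - (1 - ((m:ℝ)+1)*ρ)| := abs_max_sub_max_le_abs _ _ _
            have h2 : (1 - (k:ℝ)/n) - (1 - ((m:ℝ)+1)*ρ) = -(((k:ℝ) - N*ρ)/n) := by
              rw [hNcast]; field_simp; ring
            rw [h2, abs_neg, abs_div, abs_of_pos hn0] at h1
            rw [hL]
            exact h1
        _ = (∑ k ∈ range (N+1), w k * |(k:ℝ) - N*ρ|) / n := by
            rw [Finset.sum_div]
            exact sum_congr rfl fun k _ => by ring
    -- Cauchy-Schwarz
    have hCS : ∑ k ∈ range (N+1), w k * |(k:ℝ) - N*ρ| ≤ Real.sqrt ((N:ℝ)*ρ*(1-ρ)) := by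
      rw [Real.le_sqrt (Finset.sum_nonneg fun k _ => mul_nonneg (hw0 k) (abs_nonneg _))
        (mul_nonneg (mul_nonneg (Nat.cast_nonneg N) hρ0.le) (by linarith))]
      have h := Finset.sum_mul_sq_le_sq_mul_sq (range (N+1))
        (fun k => Real.sqrt (w k)) (fun k => Real.sqrt (w k) * |(k:ℝ) - N*ρ|)
      have e1 : ∀ k ∈ range (N+1),
          Real.sqrt (w k) * (Real.sqrt (w k) * |(k:ℝ)-N*ρ|) = w k * |(k:ℝ)-N*ρ| :=
        fun k _ => by rw [← mul_assoc, Real.mul_self_sqrt (hw0 k)]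
      have e2 : ∀ k ∈ range (N+1), Real.sqrt (w k)^2 = w k := fun k _ => Real.sq_sqrt (hw0 k)
      have e3 : ∀ k ∈ range (N+1),
          (Real.sqrt (w k) * |(k:ℝ)-N*ρ|)^2 = w k * ((k:ℝ)-N*ρ)^2 :=
        fun k _ => by rw [mul_pow, Real.sq_sqrt (hw0 k), sq_abs]
      rw [sum_congr rfl e1, sum_congr rfl e2, sum_congr rfl e3, hw1, one_mul, hvar] at h
      exact h
    -- combine
    have hfinal : (∑ k ∈ range (N+1), w k * |(k:ℝ) - N*ρ|) / n
        ≤ Real.sqrt (((m:ℝ)+1)*ρ*(1-ρ)/(t+1)) := by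
      have heq : Real.sqrt (((m:ℝ)+1)*ρ*(1-ρ)/(t+1)) = Real.sqrt ((N:ℝ)*ρ*(1-ρ)) / n := by
        have h1 : ((m:ℝ)+1)*ρ*(1-ρ)/(t+1) = ((N:ℝ)*ρ*(1-ρ)) / (n:ℝ)^2 := by
          rw [hNcast, hn]; push_cast; field_simp
        rw [h1, Real.sqrt_div (mul_nonneg (mul_nonneg (Nat.cast_nonneg N) hρ0.le) (by linarith)),
          Real.sqrt_sq hn0.le]
      rw [heq]
      exact div_le_div_of_nonneg_right hCS hn0.le |>.trans_eq rfl
    calc ‖∑ k ∈ range (N+1), w k * max (1 - (k:ℝ)/n) 0 - L‖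
        ≤ (∑ k ∈ range (N+1), w k * |(k:ℝ) - N*ρ|) / n := hstep1
      _ ≤ _ := hfinal
  · have h : Tendsto (fun t : ℕ => ((m:ℝ)+1)*ρ*(1-ρ) / (t+1)) atTop (nhds 0) := by
      have := (tendsto_const_div_atTop_nhds_zero_nat (((m:ℝ)+1)*ρ*(1-ρ))).comp
        (tendsto_add_atTop_nat 1)
      convert this using 2 with t
      simp [Function.comp]
    simpa [Function.comp_def] using (Real.continuous_sqrt.tendsto 0).comp h
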